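/- There exists an optimal multiplier λ (minimizing g over all multipliers) that simultaneously satisfies Property 1, Property 2, and Property 3. -/

import Mathlib

open Finset

/-- A multiplier matrix: nonnegative, lower-triangular (`lam k j = 0` whenever `j > k`),
with each row `k` summing to `1` over `j ≤ k`. -/
def IsMultiplier {m : ℕ} (lam : Fin m → Fin m → ℝ) : Prop :=
  (∀ k j, 0 ≤ lam k j) ∧ (∀ k j : Fin m, k < j → lam k j = 0) ∧
  (∀ k, ∑ j ∈ Finset.Iic k, lam k j = 1)

/-- The virtual value `φ(i, λ) = v i − (1 / q i) · ∑_{k ≥ i} q k (v k − v i) λ k i`. -/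
noncomputable def phi {m : ℕ} (v q : Fin m → ℝ) (lam : Fin m → Fin m → ℝ) (i : Fin m) : ℝ :=
  v i - (1 / q i) * ∑ k ∈ Finset.Ici i, q k * (v k - v i) * lam k i

/-- An allocation vector: monotone nondecreasing with entries in `[0, 1]`. -/
def IsAlloc {m : ℕ} (x : Fin m → ℝ) : Prop :=
  Monotone x ∧ ∀ i, 0 ≤ x i ∧ x i ≤ 1

/-- `g(λ)` is the supremum over allocation vectors `x` of `∑ i, q i · φ(i, λ) · x i`. -/
noncomputable def g {m : ℕ} (v q : Fin m → ℝ) (lam : Fin m → Fin m → ℝ) : ℝ :=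
  sSup {s : ℝ | ∃ x : Fin m → ℝ, IsAlloc x ∧ s = ∑ i, q i * phi v q lam i * x i}

namespace Greedy

variable (M : ℕ) (vv qq : ℕ → ℝ)

noncomputable def dem (j : ℕ) : ℝ := qq j * vv j
noncomputable def len (a b : ℝ) (k : ℕ) : ℝ := max 0 (min b (k+1) - max a k)
noncomputable def G (j : ℕ) (a b : ℝ) : ℝ :=
  ∑ k ∈ Finset.range M, qq k * (vv k - vv j) * len a b k
noncomputable def Fend (j : ℕ) (a : ℝ) : ℝ :=
  if dem vv qq j ≤ G M vv qq j a M then sInf {b : ℝ | a ≤ b ∧ dem vv qq j ≤ G M vv qq j a b}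
  else M


noncomputable def tf : ℕ → ℝ × ℝ
  | 0 => (1, Fend M vv qq 0 1)
  | (j+1) => let t := max (tf j).2 (j+2); (t, Fend M vv qq (j+1) t)

noncomputable def tcol (j : ℕ) : ℝ := (tf M vv qq j).1
noncomputable def fcol (j : ℕ) : ℝ := (tf M vv qq j).2

lemma tcol_zero : tcol M vv qq 0 = 1 := rfl
lemma fcol_def (j : ℕ) : fcol M vv qq j = Fend M vv qq j (tcol M vv qq j) := by
  cases j <;> rfl
lemma tcol_succ (j : ℕ) : tcol M vv qq (j+1) = max (fcol M vv qq j) (j+2) := rfl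

lemma continuous_G (j : ℕ) (a : ℝ) : Continuous (fun b => G M vv qq j a b) := by
  apply continuous_finset_sum
  intro k _
  apply Continuous.mul continuous_const
  unfold len; fun_prop

lemma len_self (a : ℝ) (k : ℕ) : len a a k = 0 := by
  have h : min a (k+1 : ℝ) - max a k ≤ 0 := by
    have := min_le_left a ((k:ℝ)+1); have := le_max_left a (k:ℝ); linarith
  simp [len, max_eq_left h]

lemma G_self (j : ℕ) (a : ℝ) : G M vv qq j a a = 0 := by
  unfold G; apply Finset.sum_eq_zero; intro k _; rw [len_self]; ring


lemma len_pos_facts {a b : ℝ} {k : ℕ} (h : 0 < len a b k) :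
    a < (k:ℝ)+1 ∧ (k:ℝ) < b := by
  by_contra hc
  push_neg at hc
  have h2 : min b ((k:ℝ)+1) - max a (k:ℝ) ≤ 0 := by
    rcases le_or_gt ((k:ℝ)+1) a with h3 | h3
    · have := min_le_right b ((k:ℝ)+1); have := le_max_left a (k:ℝ); linarith
    · have hb := hc h3
      have := min_le_left b ((k:ℝ)+1); have := le_max_right a (k:ℝ); linarith
  have : len a b k = 0 := by simp [len, max_eq_left h2]
  linarith

lemma len_nonneg (a b : ℝ) (k : ℕ) : 0 ≤ len a b k := le_max_left _ _

lemma G_nonneg {M : ℕ} {vv qq : ℕ → ℝ} (hq : ∀ n, 0 < qq n)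
    (hv : ∀ x y, x < y → y < M → vv x < vv y)
    (j : ℕ) {a b : ℝ} (ha : (j:ℝ)+1 ≤ a) : 0 ≤ G M vv qq j a b := by
  apply Finset.sum_nonneg
  intro k hk
  rcases eq_or_lt_of_le (len_nonneg a b k) with h | h
  · rw [← h]; ring_nf; simp
  · have hfacts := len_pos_facts h
    have hjk : j < k := by
      have : (j:ℝ) < (k:ℝ) := by linarith [hfacts.1]
      exact_mod_cast this
    have : vv j < vv k := hv j k hjk (Finset.mem_range.mp hk)
    have h1 : 0 ≤ qq k * (vv k - vv j) := mul_nonneg (hq k).le (by linarith)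
    exact mul_nonneg h1 h.le

section FendFacts

variable {M : ℕ} {vv qq : ℕ → ℝ} {j : ℕ} {a : ℝ}

private lemma S_closed : IsClosed {b : ℝ | a ≤ b ∧ dem vv qq j ≤ G M vv qq j a b} := by
  have : {b : ℝ | a ≤ b ∧ dem vv qq j ≤ G M vv qq j a b}
      = Set.Ici a ∩ (fun b => G M vv qq j a b) ⁻¹' Set.Ici (dem vv qq j) := by
    ext b; simp only [Set.mem_setOf_eq, Set.mem_inter_iff, Set.mem_Ici, Set.mem_preimage]
  rw [this]
  exact isClosed_Ici.inter (isClosed_Ici.preimage (continuous_G M vv qq j a))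

private lemma S_bddBelow : BddBelow {b : ℝ | a ≤ b ∧ dem vv qq j ≤ G M vv qq j a b} :=
  ⟨a, fun b hb => hb.1⟩

lemma Fend_ge (ha : a ≤ M) : a ≤ Fend M vv qq j a := by
  unfold Fend
  split_ifs with h
  · exact le_csInf ⟨M, ha, h⟩ (fun b hb => hb.1)
  · exact ha

lemma Fend_le (ha : a ≤ M) : Fend M vv qq j a ≤ M := by
  unfold Fend
  split_ifs with h
  · exact csInf_le S_bddBelow ⟨ha, h⟩
  · exact le_refl _

lemma Fend_supply_eq (hd : 0 ≤ dem vv qq j) (ha : a ≤ M) (h : dem vv qq j ≤ G M vv qq j a M) :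
    G M vv qq j a (Fend M vv qq j a) = dem vv qq j := by
  have hFdef : Fend M vv qq j a = sInf {b : ℝ | a ≤ b ∧ dem vv qq j ≤ G M vv qq j a b} := by
    unfold Fend; rw [if_pos h]
  have hne : Set.Nonempty {b : ℝ | a ≤ b ∧ dem vv qq j ≤ G M vv qq j a b} := ⟨M, ha, h⟩
  have hmem := (S_closed (M := M) (vv := vv) (qq := qq) (j := j) (a := a)).csInf_mem hne S_bddBelow
  rw [← hFdef] at hmem
  rcases hmem with ⟨hge, hsup⟩
  refine le_antisymm ?_ hsup
  by_contra hlt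
  push_neg at hlt
  rcases eq_or_lt_of_le hge with heq | hgt
  · rw [← heq, G_self] at hlt
    have : (0:ℝ) ≤ dem vv qq j := hd
    linarith
  · have hev : ∀ᶠ b in nhds (Fend M vv qq j a), dem vv qq j < G M vv qq j a b :=
      ContinuousAt.eventually_lt continuousAt_const ((continuous_G M vv qq j a).continuousAt) hlt
    rcases Metric.eventually_nhds_iff.mp hev with ⟨ε, hε, hball⟩
    set b := max a (Fend M vv qq j a - ε/2) with hb
    have hba : a ≤ b := le_max_left _ _
    have hblt : b < Fend M vv qq j a := by
      rw [hb]; rw [max_lt_iff]; constructor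
      · exact hgt
      · linarith
    have hbd : dist b (Fend M vv qq j a) < ε := by
      rw [Real.dist_eq, abs_sub_lt_iff]
      constructor
      · linarith
      · have : Fend M vv qq j a - ε/2 ≤ b := le_max_right _ _
        linarith
    have hbS : b ∈ {b : ℝ | a ≤ b ∧ dem vv qq j ≤ G M vv qq j a b} :=
      ⟨hba, (hball hbd).le⟩
    have := csInf_le (S_bddBelow (M := M) (vv := vv) (qq := qq) (j := j) (a := a)) hbS
    rw [← hFdef] at this
    linarith

lemma Fend_shortfall (h : G M vv qq j a M < dem vv qq j) : Fend M vv qq j a = M := by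
  unfold Fend; rw [if_neg (not_le.mpr h)]

lemma Fend_top (hd : 0 ≤ dem vv qq j) : Fend M vv qq j (M : ℝ) = M := by
  unfold Fend
  split_ifs with h
  · rw [G_self] at h
    have hdem0 : dem vv qq j = 0 := le_antisymm h hd
    apply le_antisymm
    · exact csInf_le S_bddBelow ⟨le_refl _, by rw [hdem0, G_self]⟩
    · exact le_csInf ⟨M, le_refl _, by rw [hdem0, G_self]⟩ (fun b hb => hb.1)
  · rfl

lemma Fend_supply_le (hd : 0 ≤ dem vv qq j) (ha : a ≤ M) : G M vv qq j a (Fend M vv qq j a) ≤ dem vv qq j := by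
  by_cases h : dem vv qq j ≤ G M vv qq j a M
  · exact (Fend_supply_eq hd ha h).le
  · push_neg at h
    rw [Fend_shortfall h]
    exact h.le

end FendFacts

section TF

variable {M : ℕ} {vv qq : ℕ → ℝ}

/-- global hypothesis bundle -/
structure Hyp (M : ℕ) (vv qq : ℕ → ℝ) : Prop where
  hM : 1 ≤ M
  hq : ∀ n, 0 < qq n
  hv0 : ∀ n, 0 ≤ vv n
  hv : ∀ x y, x < y → y < M → vv x < vv y

lemma dem_nonneg (H : Hyp M vv qq) (j : ℕ) : 0 ≤ dem vv qq j := mul_nonneg (H.hq j).le (H.hv0 j)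

lemma tcol_ge (j : ℕ) : (j:ℝ)+1 ≤ tcol M vv qq j := by
  cases j with
  | zero => simp [tcol_zero]
  | succ n =>
      rw [tcol_succ]
      push_cast
      refine le_trans ?_ (le_max_right _ _)
      linarith

lemma tf_le_M : ∀ j, j < M → tcol M vv qq j ≤ M ∧ fcol M vv qq j ≤ M := by
  intro j
  induction j with
  | zero =>
      intro hj
      have h1 : tcol M vv qq 0 ≤ M := by
        rw [tcol_zero]; exact_mod_cast Nat.one_le_cast.mpr hj
      exact ⟨h1, by rw [fcol_def]; exact Fend_le h1⟩
  | succ n ih =>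
      intro hj
      have hn := ih (Nat.lt_of_succ_lt hj)
      have h1 : tcol M vv qq (n+1) ≤ M := by
        rw [tcol_succ]
        refine max_le hn.2 ?_
        push_cast
        have : (n:ℝ) + 2 ≤ M := by exact_mod_cast Nat.succ_le_of_lt hj
        linarith
      exact ⟨h1, by rw [fcol_def]; exact Fend_le h1⟩

lemma tcol_le_fcol {j : ℕ} (hj : j < M) : tcol M vv qq j ≤ fcol M vv qq j := by
  rw [fcol_def]; exact Fend_ge (tf_le_M (M := M) j hj).1

lemma fcol_le_tcol_succ (j : ℕ) : fcol M vv qq j ≤ tcol M vv qq (j+1) := by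
  rw [tcol_succ]; exact le_max_left _ _

lemma fcol_mono {a b : ℕ} (hab : a ≤ b) (hb : b < M) :
    fcol M vv qq a ≤ fcol M vv qq b := by
  induction b with
  | zero => interval_cases a; exact le_refl _
  | succ n ih =>
      rcases Nat.lt_or_ge a (n+1) with h | h
      · have h1 := ih (Nat.lt_succ_iff.mp h) (Nat.lt_of_succ_lt hb)
        refine le_trans h1 ?_
        refine le_trans (fcol_le_tcol_succ (M := M) (vv := vv) (qq := qq) n) ?_
        exact tcol_le_fcol hb
      · have : a = n+1 := le_antisymm hab h
        rw [this]

lemma tcol_mono {a b : ℕ} (hab : a ≤ b) (hb : b < M) :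
    tcol M vv qq a ≤ tcol M vv qq b := by
  rcases Nat.lt_or_ge a b with h | h
  · rcases Nat.exists_eq_add_of_lt h with ⟨c, rfl⟩
    have hb' : a + c < M := by omega
    calc tcol M vv qq a ≤ fcol M vv qq (a+c) := by
          refine le_trans (tcol_le_fcol (by omega)) ?_
          exact fcol_mono (by omega) hb'
      _ ≤ tcol M vv qq (a+c+1) := fcol_le_tcol_succ _
  · have : a = b := le_antisymm hab h
    rw [this]

end TF

section PS

variable {M : ℕ} {vv qq : ℕ → ℝ}

open Classical in
/-- the first column with a supply shortfall (or the last column) -/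
noncomputable def Pcol (M : ℕ) (vv qq : ℕ → ℝ) : ℕ :=
  Nat.find (p := fun j => G M vv qq j (tcol M vv qq j) M < dem vv qq j ∨ j = M - 1)
    ⟨M - 1, Or.inr rfl⟩

lemma Pcol_le : Pcol M vv qq ≤ M - 1 := by
  classical
  exact Nat.find_le (Or.inr rfl)

lemma Pcol_lt_M (hM : 1 ≤ M) : Pcol M vv qq < M :=
  lt_of_le_of_lt Pcol_le (by omega)

lemma Pcol_min {j : ℕ} (hj : j < Pcol M vv qq) :
    dem vv qq j ≤ G M vv qq j (tcol M vv qq j) M ∧ j ≠ M - 1 := by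
  classical
  have h0 := Nat.find_min (p := fun j => G M vv qq j (tcol M vv qq j) M < dem vv qq j ∨ j = M - 1)
    ⟨M - 1, Or.inr rfl⟩ hj
  have h1 : ¬(G M vv qq j (tcol M vv qq j) M < dem vv qq j ∨ j = M - 1) := h0
  rw [not_or] at h1
  exact ⟨not_lt.mp h1.1, h1.2⟩

lemma Pcol_spec :
    G M vv qq (Pcol M vv qq) (tcol M vv qq (Pcol M vv qq)) M < dem vv qq (Pcol M vv qq)
    ∨ Pcol M vv qq = M - 1 := by
  classical
  exact Nat.find_spec (p := fun j => G M vv qq j (tcol M vv qq j) M < dem vv qq j ∨ j = M - 1)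
    ⟨M - 1, Or.inr rfl⟩

/-- supply actually delivered to column j -/
noncomputable def Scol (M : ℕ) (vv qq : ℕ → ℝ) (j : ℕ) : ℝ :=
  G M vv qq j (tcol M vv qq j) (fcol M vv qq j)

lemma Scol_eq_of_lt (H : Hyp M vv qq) {j : ℕ} (hj : j < Pcol M vv qq) :
    Scol M vv qq j = dem vv qq j := by
  have hjM : j < M := lt_of_lt_of_le hj (le_trans Pcol_le (by omega))
  rw [Scol, fcol_def]
  exact Fend_supply_eq (dem_nonneg H j) (tf_le_M j hjM).1 (Pcol_min hj).1

lemma Scol_nonneg (H : Hyp M vv qq) (j : ℕ) : 0 ≤ Scol M vv qq j :=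
  G_nonneg H.hq H.hv j (tcol_ge j)

lemma Scol_le (H : Hyp M vv qq) {j : ℕ} (hj : j < M) : Scol M vv qq j ≤ dem vv qq j := by
  rw [Scol, fcol_def]
  exact Fend_supply_le (dem_nonneg H j) (tf_le_M j hj).1

lemma tf_top (H : Hyp M vv qq) : ∀ j, Pcol M vv qq < j → j < M →
    tcol M vv qq j = M ∧ fcol M vv qq j = M := by
  intro j
  induction j with
  | zero => omega
  | succ n ih =>
      intro hPn hnM
      have hfn : fcol M vv qq n = (M:ℝ) := by
        rcases Nat.lt_or_ge (Pcol M vv qq) n with h | h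
        · exact (ih h (by omega)).2
        · have hPn' : Pcol M vv qq = n := by omega
          rcases Pcol_spec (M := M) (vv := vv) (qq := qq) with hs | hl
          · rw [← hPn', fcol_def]
            exact Fend_shortfall hs
          · omega
      have ht : tcol M vv qq (n+1) = (M:ℝ) := by
        rw [tcol_succ, hfn]
        rw [max_eq_left]
        push_cast
        have : n + 2 ≤ M := by omega
        exact_mod_cast this
      refine ⟨ht, ?_⟩
      rw [fcol_def, ht]
      exact Fend_top (dem_nonneg H _)

end PS

section Cover

variable {M : ℕ} {vv qq : ℕ → ℝ}

/-- mass that row `k` sends to column `j` -/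
noncomputable def lenk (M : ℕ) (vv qq : ℕ → ℝ) (k j : ℕ) : ℝ :=
  len (tcol M vv qq j) (fcol M vv qq j) k

/-- total non-diagonal mass of row `k` among the first `n` columns -/
noncomputable def Usum (M : ℕ) (vv qq : ℕ → ℝ) (k n : ℕ) : ℝ :=
  ∑ j ∈ Finset.range n, lenk M vv qq k j

lemma Usum_nonneg (k n : ℕ) : 0 ≤ Usum M vv qq k n :=
  Finset.sum_nonneg (fun j _ => len_nonneg _ _ _)

lemma Usum_succ (k n : ℕ) :
    Usum M vv qq k (n+1) = Usum M vv qq k n + lenk M vv qq k n :=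
  Finset.sum_range_succ _ _

lemma lemU (k : ℕ) : ∀ n, n + 1 < M →
    Usum M vv qq k (n+1) ≤ max 0 (min (fcol M vv qq n) ((k:ℝ)+1) - k) := by
  intro n
  induction n with
  | zero =>
      intro _
      have h1 : Usum M vv qq k 1 = lenk M vv qq k 0 := by
        rw [Usum_succ]; simp [Usum]
      rw [h1]
      unfold lenk len
      rw [tcol_zero]
      refine max_le_max le_rfl ?_
      have : (k:ℝ) ≤ max 1 (k:ℝ) := le_max_right _ _
      linarith
  | succ n ih =>
      intro hn
      have ihn := ih (by omega)
      rw [Usum_succ]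
      set A := min (fcol M vv qq n) ((k:ℝ)+1) with hA
      set B := min (fcol M vv qq (n+1)) ((k:ℝ)+1) with hB
      set T := max (tcol M vv qq (n+1)) (k:ℝ) with hT
      have hlenk : lenk M vv qq k (n+1) = max 0 (B - T) := rfl
      have hAB : A ≤ B := by
        refine min_le_min ?_ le_rfl
        exact fcol_mono (by omega) (by omega)
      have hAT : A ≤ T := by
        have h1 : A ≤ fcol M vv qq n := min_le_left _ _
        have h2 := fcol_le_tcol_succ (M := M) (vv := vv) (qq := qq) n
        have h3 : tcol M vv qq (n+1) ≤ T := le_max_left _ _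
        linarith
      have hTk : (k:ℝ) ≤ T := le_max_right _ _
      rw [hlenk]
      rcases le_total B T with hBT | hBT
      · rw [max_eq_left (by linarith : B - T ≤ 0)]
        have := max_le_max (le_refl (0:ℝ)) (by linarith : A - (k:ℝ) ≤ B - (k:ℝ))
        linarith
      · rw [max_eq_right (by linarith : (0:ℝ) ≤ B - T)]
        have h4 : max 0 (A - (k:ℝ)) ≤ T - (k:ℝ) := max_le (by linarith) (by linarith)
        have h5 : max 0 (B - (k:ℝ)) = B - (k:ℝ) := max_eq_right (by linarith)
        linarith

lemma Usum_le_one (k : ℕ) (hk : k < M) : Usum M vv qq k k ≤ 1 := by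
  cases k with
  | zero => simp [Usum]
  | succ n =>
      have h := lemU (M := M) (vv := vv) (qq := qq) (n+1) n hk
      refine le_trans h (max_le (by norm_num) ?_)
      have h1 : min (fcol M vv qq n) (((n+1:ℕ):ℝ)+1) ≤ ((n+1:ℕ):ℝ)+1 := min_le_right _ _
      linarith

lemma lemC (k : ℕ) (hk : k < M) : ∀ n, n + 1 ≤ k →
    min (fcol M vv qq n) ((k:ℝ)+1) - k ≤ Usum M vv qq k (n+1) := by
  intro n
  induction n with
  | zero =>
      intro h1
      have hU : Usum M vv qq k 1 = lenk M vv qq k 0 := by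
        rw [Usum_succ]; simp [Usum]
      rw [hU]
      unfold lenk len
      rw [tcol_zero]
      have hmax : max (1:ℝ) (k:ℝ) = (k:ℝ) := by
        rw [max_eq_right]; exact_mod_cast h1
      rw [hmax]
      exact le_max_right _ _
  | succ n ih =>
      intro hn
      have ihn := ih (by omega)
      rw [Usum_succ]
      set B := min (fcol M vv qq (n+1)) ((k:ℝ)+1) with hB
      have htc : tcol M vv qq (n+1) = max (fcol M vv qq n) ((n:ℝ)+2) := by
        rw [tcol_succ]
      have hn2k : ((n:ℝ)+2) ≤ (k:ℝ) := by exact_mod_cast hn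
      have hlenk : lenk M vv qq k (n+1)
          = max 0 (B - max (fcol M vv qq n) (k:ℝ)) := by
        unfold lenk len
        rw [htc]
        congr 1
        rw [max_assoc]
        congr 1
        rw [max_eq_right hn2k]
      rw [hlenk]
      rcases le_total (fcol M vv qq n) (k:ℝ) with hfk | hfk
      · rw [max_eq_right hfk]
        have h5 : B - (k:ℝ) ≤ max 0 (B - (k:ℝ)) := le_max_right _ _
        have h6 := Usum_nonneg (M := M) (vv := vv) (qq := qq) k (n+1)
        linarith
      · rw [max_eq_left hfk]
        rcases le_total ((k:ℝ)+1) (fcol M vv qq n) with hf1 | hf1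
        · have hA : min (fcol M vv qq n) ((k:ℝ)+1) = (k:ℝ)+1 := min_eq_right hf1
          rw [hA] at ihn
          have h5 : B ≤ (k:ℝ)+1 := min_le_right _ _
          have h6 : (0:ℝ) ≤ max 0 (B - fcol M vv qq n) := le_max_left _ _
          linarith
        · have hA : min (fcol M vv qq n) ((k:ℝ)+1) = fcol M vv qq n := min_eq_left hf1
          rw [hA] at ihn
          rcases le_total B (fcol M vv qq n) with h7 | h7
          · have h6 : (0:ℝ) ≤ max 0 (B - fcol M vv qq n) := le_max_left _ _
            linarith
          · rw [max_eq_right (by linarith : (0:ℝ) ≤ B - fcol M vv qq n)]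
            linarith

lemma fullrow (H : Hyp M vv qq) {k : ℕ} (hPk : Pcol M vv qq < k) (hk : k < M) :
    Usum M vv qq k k = 1 := by
  have hk1 : 1 ≤ k := by omega
  have hfM : fcol M vv qq (k-1) = (M:ℝ) := by
    rcases Nat.lt_or_ge (Pcol M vv qq) (k-1) with h | h
    · exact (tf_top H (k-1) h (by omega)).2
    · have hP : Pcol M vv qq = k - 1 := by omega
      rcases Pcol_spec (M := M) (vv := vv) (qq := qq) with hs | hl
      · rw [← hP, fcol_def]; exact Fend_shortfall hs
      · omega
  have h1 := lemC (M := M) (vv := vv) (qq := qq) k hk (k-1) (by omega)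
  have h2 : k - 1 + 1 = k := by omega
  rw [h2, hfM] at h1
  have h3 : min ((M:ℝ)) ((k:ℝ)+1) = (k:ℝ)+1 := by
    rw [min_eq_right]
    have : (k:ℝ)+1 ≤ M := by exact_mod_cast hk
    linarith
  rw [h3] at h1
  have h4 := Usum_le_one (M := M) (vv := vv) (qq := qq) k hk
  linarith

end Cover

section Chain

variable {M : ℕ} {vv qq : ℕ → ℝ}

/-- the linking row between columns `j` and `j+1` -/
noncomputable def Rrow (M : ℕ) (vv qq : ℕ → ℝ) (j : ℕ) : ℕ :=
  max (j+1) ((Int.ceil (fcol M vv qq j)).toNat - 1)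

noncomputable def factor (M : ℕ) (vv qq : ℕ → ℝ) (j : ℕ) : ℝ :=
  (vv (Rrow M vv qq j) - vv (j+1)) / (vv (Rrow M vv qq j) - vv j)

/-- the dual allocation -/
noncomputable def xs (M : ℕ) (vv qq : ℕ → ℝ) (n : ℕ) : ℝ :=
  ∏ j ∈ Finset.Ico n (Pcol M vv qq), factor M vv qq j

lemma R_ge (j : ℕ) : j + 1 ≤ Rrow M vv qq j := le_max_left _ _

lemma R_lt_M (H : Hyp M vv qq) {j : ℕ} (hj : j < Pcol M vv qq) : Rrow M vv qq j < M := by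
  have hjM : j + 1 < M := by
    have := Pcol_le (M := M) (vv := vv) (qq := qq)
    have := H.hM
    omega
  have hf : fcol M vv qq j ≤ (M:ℝ) := (tf_le_M j (by omega)).2
  have hceil : Int.ceil (fcol M vv qq j) ≤ (M:ℤ) := Int.ceil_le.mpr (by exact_mod_cast hf)
  have htn : (Int.ceil (fcol M vv qq j)).toNat ≤ M := by
    rw [Int.toNat_le]; exact_mod_cast hceil
  have := H.hM
  unfold Rrow
  omega

lemma R_le_of {j k : ℕ} (hjk : j + 1 ≤ k) (hf : fcol M vv qq j ≤ (k:ℝ)+1) :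
    Rrow M vv qq j ≤ k := by
  have hceil : Int.ceil (fcol M vv qq j) ≤ (k:ℤ)+1 := Int.ceil_le.mpr (by push_cast; linarith)
  have htn : (Int.ceil (fcol M vv qq j)).toNat ≤ k + 1 := by
    rw [Int.toNat_le]; push_cast; exact_mod_cast hceil
  unfold Rrow
  omega

lemma le_R_of {j k : ℕ} (hf : (k:ℝ) < fcol M vv qq j) : k ≤ Rrow M vv qq j := by
  have hceil : (k:ℤ) < Int.ceil (fcol M vv qq j) := Int.lt_ceil.mpr hf
  have h0 : (0:ℤ) ≤ Int.ceil (fcol M vv qq j) :=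
    le_trans (Int.natCast_nonneg k) hceil.le
  have htn : k + 1 ≤ (Int.ceil (fcol M vv qq j)).toNat := by
    rw [Int.le_toNat h0]; push_cast; omega
  unfold Rrow
  omega

lemma vden_pos (H : Hyp M vv qq) {j : ℕ} (hj : j < Pcol M vv qq) :
    0 < vv (Rrow M vv qq j) - vv j := by
  have h1 : j < Rrow M vv qq j := by have := R_ge (M := M) (vv := vv) (qq := qq) j; omega
  have := H.hv j _ h1 (R_lt_M H hj)
  linarith

lemma vnum_nonneg (H : Hyp M vv qq) {j : ℕ} (hj : j < Pcol M vv qq) :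
    0 ≤ vv (Rrow M vv qq j) - vv (j+1) := by
  rcases eq_or_lt_of_le (R_ge (M := M) (vv := vv) (qq := qq) j) with h | h
  · rw [← h]; linarith
  · have := H.hv (j+1) _ h (R_lt_M H hj); linarith

lemma factor_nonneg (H : Hyp M vv qq) {j : ℕ} (hj : j < Pcol M vv qq) :
    0 ≤ factor M vv qq j :=
  div_nonneg (vnum_nonneg H hj) (vden_pos H hj).le

lemma factor_le_one (H : Hyp M vv qq) {j : ℕ} (hj : j < Pcol M vv qq) :
    factor M vv qq j ≤ 1 := by
  rw [factor, div_le_one (vden_pos H hj)]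
  have hjM : j + 1 < M := by
    have h1 := R_ge (M := M) (vv := vv) (qq := qq) j
    have := R_lt_M H hj
    omega
  have := H.hv j (j+1) (by omega) hjM
  linarith

lemma xs_nonneg (H : Hyp M vv qq) (n : ℕ) : 0 ≤ xs M vv qq n :=
  Finset.prod_nonneg (fun j hj => factor_nonneg H (Finset.mem_Ico.mp hj).2)

lemma xs_le_one (H : Hyp M vv qq) (n : ℕ) : xs M vv qq n ≤ 1 :=
  Finset.prod_le_one (fun j hj => factor_nonneg H (Finset.mem_Ico.mp hj).2)
    (fun j hj => factor_le_one H (Finset.mem_Ico.mp hj).2)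

lemma xs_of_ge {n : ℕ} (h : Pcol M vv qq ≤ n) : xs M vv qq n = 1 := by
  unfold xs
  rw [Finset.Ico_eq_empty (by omega), Finset.prod_empty]

lemma xs_succ {n : ℕ} (h : n < Pcol M vv qq) :
    xs M vv qq n = factor M vv qq n * xs M vv qq (n+1) := by
  unfold xs
  rw [Finset.prod_eq_prod_Ico_succ_bot h]

lemma xs_mono_succ (H : Hyp M vv qq) (n : ℕ) : xs M vv qq n ≤ xs M vv qq (n+1) := by
  rcases Nat.lt_or_ge n (Pcol M vv qq) with h | h
  · rw [xs_succ h]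
    exact mul_le_of_le_one_left (xs_nonneg H _) (factor_le_one H h)
  · rw [xs_of_ge h, xs_of_ge (by omega)]

lemma xs_key (H : Hyp M vv qq) {j : ℕ} (hj : j < Pcol M vv qq) :
    (vv (Rrow M vv qq j) - vv j) * xs M vv qq j
      = (vv (Rrow M vv qq j) - vv (j+1)) * xs M vv qq (j+1) := by
  have hne := (vden_pos H hj).ne'
  rw [xs_succ hj, factor]
  field_simp

lemma stepA (H : Hyp M vv qq) {j k : ℕ} (hj : j < Pcol M vv qq)
    (hk : Rrow M vv qq j ≤ k) (hkM : k < M) :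
    (vv k - vv j) * xs M vv qq j ≤ (vv k - vv (j+1)) * xs M vv qq (j+1) := by
  have hD := vden_pos H hj
  have hE := xs_key H hj
  have hvkR : vv (Rrow M vv qq j) ≤ vv k := by
    rcases eq_or_lt_of_le hk with h | h
    · rw [h]
    · exact (H.hv _ _ h hkM).le
  have hjj1 : vv j < vv (j+1) := by
    have hjM : j + 1 < M := by
      have h1 := R_ge (M := M) (vv := vv) (qq := qq) j
      have := R_lt_M H hj
      omega
    exact H.hv j (j+1) (by omega) hjM
  have hxs1 := xs_nonneg H (j+1)
  have hprod : 0 ≤ xs M vv qq (j+1) * ((vv (j+1) - vv j) * (vv k - vv (Rrow M vv qq j))) :=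
    mul_nonneg hxs1 (mul_nonneg (by linarith) (by linarith))
  have hX : (vv (Rrow M vv qq j) - vv j) * ((vv k - vv j) * xs M vv qq j)
      ≤ (vv (Rrow M vv qq j) - vv j) * ((vv k - vv (j+1)) * xs M vv qq (j+1)) := by
    have hL : (vv (Rrow M vv qq j) - vv j) * ((vv k - vv j) * xs M vv qq j)
        = (vv k - vv j) * ((vv (Rrow M vv qq j) - vv (j+1)) * xs M vv qq (j+1)) := by
      rw [← hE]; ring
    rw [hL]
    nlinarith [hprod]
  exact le_of_mul_le_mul_left hX hD

lemma stepB (H : Hyp M vv qq) {j k : ℕ} (hj : j < Pcol M vv qq)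
    (hk : k ≤ Rrow M vv qq j) :
    (vv k - vv (j+1)) * xs M vv qq (j+1) ≤ (vv k - vv j) * xs M vv qq j := by
  have hD := vden_pos H hj
  have hE := xs_key H hj
  have hvkR : vv k ≤ vv (Rrow M vv qq j) := by
    rcases eq_or_lt_of_le hk with h | h
    · rw [h]
    · exact (H.hv _ _ h (R_lt_M H hj)).le
  have hjj1 : vv j < vv (j+1) := by
    have h1 := R_ge (M := M) (vv := vv) (qq := qq) j
    have := R_lt_M H hj
    exact H.hv j (j+1) (by omega) (by omega)
  have hxs1 := xs_nonneg H (j+1)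
  have hprod : 0 ≤ xs M vv qq (j+1) * ((vv (j+1) - vv j) * (vv (Rrow M vv qq j) - vv k)) :=
    mul_nonneg hxs1 (mul_nonneg (by linarith) (by linarith))
  have hX : (vv (Rrow M vv qq j) - vv j) * ((vv k - vv (j+1)) * xs M vv qq (j+1))
      ≤ (vv (Rrow M vv qq j) - vv j) * ((vv k - vv j) * xs M vv qq j) := by
    have hL : (vv (Rrow M vv qq j) - vv j) * ((vv k - vv j) * xs M vv qq j)
        = (vv k - vv j) * ((vv (Rrow M vv qq j) - vv (j+1)) * xs M vv qq (j+1)) := by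
      rw [← hE]; ring
    rw [hL]
    nlinarith [hprod]
  exact le_of_mul_le_mul_left hX hD

lemma stepB' (H : Hyp M vv qq) {j k : ℕ} (hj : Pcol M vv qq ≤ j) (hjM : j + 1 < M) :
    (vv k - vv (j+1)) * xs M vv qq (j+1) ≤ (vv k - vv j) * xs M vv qq j := by
  rw [xs_of_ge hj, xs_of_ge (by omega)]
  have := H.hv j (j+1) (by omega) hjM
  linarith

lemma chainA (H : Hyp M vv qq) {k : ℕ} (hkM : k < M) (a : ℕ) :
    ∀ b, a ≤ b → (∀ j, a ≤ j → j < b → j < Pcol M vv qq ∧ Rrow M vv qq j ≤ k) →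
    (vv k - vv a) * xs M vv qq a ≤ (vv k - vv b) * xs M vv qq b := by
  intro b
  induction b with
  | zero => intro hab _; interval_cases a; exact le_refl _
  | succ n ih =>
      intro hab hcond
      rcases Nat.lt_or_ge a (n+1) with h | h
      · have h1 := ih (by omega) (fun j hj1 hj2 => hcond j hj1 (by omega))
        have h2 := hcond n (by omega) (by omega)
        exact le_trans h1 (stepA H h2.1 h2.2 hkM)
      · have : a = n+1 := by omega
        rw [this]

lemma chainB (H : Hyp M vv qq) {k : ℕ} (a : ℕ) :
    ∀ b, a ≤ b →
    (∀ j, a ≤ j → j < b → (j < Pcol M vv qq ∧ k ≤ Rrow M vv qq j) ∨ (Pcol M vv qq ≤ j ∧ j + 1 < M)) →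
    (vv k - vv b) * xs M vv qq b ≤ (vv k - vv a) * xs M vv qq a := by
  intro b
  induction b with
  | zero => intro hab _; interval_cases a; exact le_refl _
  | succ n ih =>
      intro hab hcond
      rcases Nat.lt_or_ge a (n+1) with h | h
      · have h1 := ih (by omega) (fun j hj1 hj2 => hcond j hj1 (by omega))
        refine le_trans ?_ h1
        rcases hcond n (by omega) (by omega) with hc | hc
        · exact stepB H hc.1 hc.2
        · exact stepB' H hc.1 hc.2
      · have : a = n+1 := by omega
        rw [this]

end Chain

section Pairwise

variable {M : ℕ} {vv qq : ℕ → ℝ}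

/-- the multiplier matrix (ℕ-level) -/
noncomputable def lamN (M : ℕ) (vv qq : ℕ → ℝ) (k j : ℕ) : ℝ :=
  if j < k then lenk M vv qq k j
  else if j = k then 1 - Usum M vv qq k k else 0

lemma lenk_eq_zero_of_le {k j : ℕ} (hjk : k ≤ j) : lenk M vv qq k j = 0 := by
  unfold lenk len
  have h1 : min (fcol M vv qq j) ((k:ℝ)+1) - max (tcol M vv qq j) k ≤ 0 := by
    have h2 : ((k:ℝ))+1 ≤ (j:ℝ)+1 := by
      have : (k:ℝ) ≤ (j:ℝ) := by exact_mod_cast hjk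
      linarith
    have h3 := tcol_ge (M := M) (vv := vv) (qq := qq) j
    have h4 := min_le_right (fcol M vv qq j) ((k:ℝ)+1)
    have h5 := le_max_left (tcol M vv qq j) (k:ℝ)
    linarith
  rw [max_eq_left h1]

lemma col_gt_P_zero (H : Hyp M vv qq) {k j : ℕ} (hj : Pcol M vv qq < j) (hjM : j < M) :
    lenk M vv qq k j = 0 := by
  obtain ⟨ht, hf⟩ := tf_top H j hj hjM
  unfold lenk len
  rw [ht, hf]
  have h1 : min ((M:ℝ)) ((k:ℝ)+1) - max ((M:ℝ)) (k:ℝ) ≤ 0 := by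
    have := min_le_left ((M:ℝ)) ((k:ℝ)+1)
    have := le_max_left ((M:ℝ)) (k:ℝ)
    linarith
  rw [max_eq_left h1]

lemma diag_xs_zero (H : Hyp M vv qq) {k i : ℕ} (hk : k < M) (hpos : Usum M vv qq k k < 1)
    (hik : i < k) : xs M vv qq i = 0 := by
  have hkP : k ≤ Pcol M vv qq := by
    by_contra h
    push_neg at h
    rw [fullrow H h hk] at hpos
    linarith
  have hk1 : 1 ≤ k := by omega
  have h1 := lemC (M := M) (vv := vv) (qq := qq) k hk (k-1) (by omega)
  have h2 : k - 1 + 1 = k := by omega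
  rw [h2] at h1
  have hfk : fcol M vv qq (k-1) < (k:ℝ)+1 := by
    by_contra h
    push_neg at h
    rw [min_eq_right h] at h1
    linarith
  have hjP : k - 1 < Pcol M vv qq := by omega
  have hRk : Rrow M vv qq (k-1) = k := by
    have hle : Rrow M vv qq (k-1) ≤ k := R_le_of (by omega) hfk.le
    have hge := R_ge (M := M) (vv := vv) (qq := qq) (k-1)
    omega
  have hfac : factor M vv qq (k-1) = 0 := by
    unfold factor
    rw [hRk, h2, sub_self, zero_div]
  unfold xs
  exact Finset.prod_eq_zero (Finset.mem_Ico.mpr ⟨by omega, hjP⟩) hfac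

lemma pairwise_u (H : Hyp M vv qq) {k s i : ℕ} (hkM : k < M) (hik : i ≤ k) (hsk : s ≤ k)
    (hpos : 0 < lamN M vv qq k s) :
    (vv k - vv i) * xs M vv qq i ≤ (vv k - vv s) * xs M vv qq s := by
  rcases eq_or_lt_of_le hsk with hs | hs
  · -- diagonal case
    subst hs
    have hdiag : lamN M vv qq s s = 1 - Usum M vv qq s s := by
      unfold lamN
      rw [if_neg (lt_irrefl s), if_pos rfl]
    rw [hdiag] at hpos
    rcases eq_or_lt_of_le hik with hi | hi
    · subst hi; exact le_refl _
    · rw [diag_xs_zero H hkM (by linarith) hi]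
      simp
  · -- genuine column s < k
    have hlen : 0 < lenk M vv qq k s := by
      have : lamN M vv qq k s = lenk M vv qq k s := by unfold lamN; rw [if_pos hs]
      linarith [this ▸ hpos]
    obtain ⟨hts, hfs⟩ := len_pos_facts hlen
    have hsP : s ≤ Pcol M vv qq := by
      by_contra h
      push_neg at h
      rw [col_gt_P_zero H h (by omega)] at hlen
      linarith
    rcases eq_or_lt_of_le hik with hi | hi
    · subst hi
      have h1 : vv s ≤ vv i := (H.hv s i hs hkM).le
      have h2 := xs_nonneg H s
      nlinarith
    · rcases Nat.le_total i s with his | his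
      · refine chainA H hkM i s his ?_
        intro j hj1 hj2
        refine ⟨by omega, ?_⟩
        refine R_le_of (by omega) ?_
        have h3 : fcol M vv qq j ≤ tcol M vv qq s := by
          refine le_trans (fcol_le_tcol_succ _) ?_
          exact tcol_mono (by omega) (by omega)
        linarith
      · refine chainB H s i his ?_
        intro j hj1 hj2
        rcases Nat.lt_or_ge j (Pcol M vv qq) with hjP | hjP
        · refine Or.inl ⟨hjP, le_R_of ?_⟩
          have h3 : fcol M vv qq s ≤ fcol M vv qq j := fcol_mono hj1 (by omega)
          linarith
        · exact Or.inr ⟨hjP, by omega⟩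

end Pairwise

section RowFacts

variable {M : ℕ} {vv qq : ℕ → ℝ}

lemma lamN_nonneg (H : Hyp M vv qq) {k : ℕ} (hk : k < M) (j : ℕ) :
    0 ≤ lamN M vv qq k j := by
  unfold lamN
  split_ifs with h1 h2
  · exact len_nonneg _ _ _
  · linarith [Usum_le_one (M := M) (vv := vv) (qq := qq) k hk]
  · exact le_refl _

lemma lamN_eq_zero_of_gt {k j : ℕ} (hjk : k < j) : lamN M vv qq k j = 0 := by
  unfold lamN
  rw [if_neg (by omega), if_neg (by omega)]

lemma lamN_rowsum {k : ℕ} (hk : k < M) :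
    ∑ j ∈ Finset.range (k+1), lamN M vv qq k j = 1 := by
  rw [Finset.sum_range_succ]
  have h1 : ∀ j ∈ Finset.range k, lamN M vv qq k j = lenk M vv qq k j := by
    intro j hj
    unfold lamN
    rw [if_pos (Finset.mem_range.mp hj)]
  rw [Finset.sum_congr rfl h1]
  have h2 : lamN M vv qq k k = 1 - Usum M vv qq k k := by
    unfold lamN
    rw [if_neg (lt_irrefl k), if_pos rfl]
  rw [h2]
  unfold Usum
  ring

lemma col_zero_full (H : Hyp M vv qq) {i : ℕ} (hi : Pcol M vv qq < i) (hiM : i < M)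
    (k : ℕ) (hk : k < M) : lamN M vv qq k i = 0 := by
  unfold lamN
  split_ifs with h1 h2
  · exact col_gt_P_zero H hi hiM
  · subst h2
    rw [fullrow H hi hk]
    ring
  · rfl

lemma Scol_sum (j : ℕ) :
    Scol M vv qq j = ∑ k ∈ Finset.range M, qq k * (vv k - vv j) * lenk M vv qq k j := rfl

lemma Scol_sum_lamN {j : ℕ} (hj : j < M) :
    Scol M vv qq j = ∑ k ∈ Finset.range M, qq k * (vv k - vv j) * lamN M vv qq k j := by
  rw [Scol_sum]
  refine Finset.sum_congr rfl ?_
  intro k _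
  rcases Nat.lt_trichotomy j k with h | h | h
  · unfold lamN; rw [if_pos h]
  · subst h
    rw [lenk_eq_zero_of_le (le_refl j), sub_self]
    ring
  · rw [lenk_eq_zero_of_le h.le, lamN_eq_zero_of_gt h]

/-- value of phi at ironed columns -/
lemma Scol_gt_P (H : Hyp M vv qq) {j : ℕ} (hj : Pcol M vv qq < j) (hjM : j < M) :
    Scol M vv qq j = 0 := by
  obtain ⟨ht, hf⟩ := tf_top H j hj hjM
  rw [Scol, ht, hf, G_self]

end RowFacts

section FinLevel

variable {m : ℕ} (v q : Fin m → ℝ)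

noncomputable def vvOf : ℕ → ℝ := fun n => if h : n < m then v ⟨n, h⟩ else 0
noncomputable def qqOf : ℕ → ℝ := fun n => if h : n < m then q ⟨n, h⟩ else 1

lemma vvOf_val (i : Fin m) : vvOf v i.val = v i := by
  unfold vvOf
  rw [dif_pos i.isLt]

lemma qqOf_val (i : Fin m) : qqOf q i.val = q i := by
  unfold qqOf
  rw [dif_pos i.isLt]

noncomputable def lamG : Fin m → Fin m → ℝ := fun k j => lamN m (vvOf v) (qqOf q) k.val j.val
noncomputable def xsG : Fin m → ℝ := fun i => xs m (vvOf v) (qqOf q) i.val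

lemma HypOf (hm : 1 ≤ m) (hv0 : ∀ i, 0 ≤ v i) (hvmono : ∀ i j : Fin m, i < j → v i < v j)
    (hq : ∀ i, 0 < q i) : Hyp m (vvOf v) (qqOf q) := by
  constructor
  · exact hm
  · intro n
    unfold qqOf
    split_ifs with h
    · exact hq _
    · norm_num
  · intro n
    unfold vvOf
    split_ifs with h
    · exact hv0 _
    · exact le_refl 0
  · intro x y hxy hyM
    have hxM : x < m := by omega
    unfold vvOf
    rw [dif_pos hxM, dif_pos hyM]
    exact hvmono _ _ (by exact_mod_cast hxy)

/-- bridge for `Iic` sums -/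
lemma bridge_Iic (k : Fin m) (F : ℕ → ℝ) (h0 : ∀ j, k.val < j → F j = 0) :
    ∑ j ∈ Finset.Iic k, F j.val = ∑ j ∈ Finset.range (k.val+1), F j := by
  have h1 : ∑ j ∈ Finset.Iic k, F j.val = ∑ j : Fin m, F j.val := by
    refine Finset.sum_subset (Finset.subset_univ _) ?_
    intro j _ hj
    rw [Finset.mem_Iic] at hj
    exact h0 j.val (by omega)
  rw [h1, Fin.sum_univ_eq_sum_range (fun n => F n) m]
  symm
  refine Finset.sum_subset ?_ ?_
  · intro n hn
    rw [Finset.mem_range] at hn ⊢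
    have := k.isLt
    omega
  · intro n _ hn
    rw [Finset.mem_range] at hn
    exact h0 n (by omega)

lemma bridge_Ici (i : Fin m) (F : ℕ → ℝ) (h0 : ∀ k, k < i.val → F k = 0) :
    ∑ k ∈ Finset.Ici i, F k.val = ∑ k ∈ Finset.range m, F k := by
  have h1 : ∑ k ∈ Finset.Ici i, F k.val = ∑ k : Fin m, F k.val := by
    refine Finset.sum_subset (Finset.subset_univ _) ?_
    intro j _ hj
    rw [Finset.mem_Ici] at hj
    exact h0 j.val (by omega)
  rw [h1, Fin.sum_univ_eq_sum_range (fun n => F n) m]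

lemma lamG_isMultiplier (H : Hyp m (vvOf v) (qqOf q)) : IsMultiplier (lamG v q) := by
  refine ⟨fun k j => lamN_nonneg H k.isLt j.val, ?_, ?_⟩
  · intro k j hkj
    exact lamN_eq_zero_of_gt (by exact_mod_cast hkj)
  · intro k
    have hb := bridge_Iic k (fun j => lamN m (vvOf v) (qqOf q) k.val j)
      (fun j hj => lamN_eq_zero_of_gt hj)
    exact hb.trans (lamN_rowsum k.isLt)

lemma phi_eq (i : Fin m) :
    phi v q (lamG v q) i
      = vvOf v i.val - (1 / qqOf q i.val) * Scol m (vvOf v) (qqOf q) i.val := by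
  unfold phi
  rw [vvOf_val, qqOf_val]
  congr 1
  congr 1
  have h1 : ∀ k ∈ Finset.Ici i, q k * (v k - v i) * lamG v q k i
      = (fun n => qqOf q n * (vvOf v n - vvOf v i.val) * lamN m (vvOf v) (qqOf q) n i.val) k.val := by
    intro k _
    simp only [lamG, vvOf_val, qqOf_val]
  rw [Finset.sum_congr rfl h1]
  refine (bridge_Ici i
    (fun n => qqOf q n * (vvOf v n - vvOf v i.val) * lamN m (vvOf v) (qqOf q) n i.val)
    (fun k hk => by rw [lamN_eq_zero_of_gt hk]; ring)).trans ?_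
  exact (Scol_sum_lamN i.isLt).symm

lemma phi_lt_P (H : Hyp m (vvOf v) (qqOf q)) {i : Fin m}
    (hi : i.val < Pcol m (vvOf v) (qqOf q)) : phi v q (lamG v q) i = 0 := by
  rw [phi_eq, Scol_eq_of_lt H hi]
  unfold dem
  have hq := (H.hq i.val).ne'
  field_simp
  ring

lemma phi_gt_P (H : Hyp m (vvOf v) (qqOf q)) {i : Fin m}
    (hi : Pcol m (vvOf v) (qqOf q) < i.val) : phi v q (lamG v q) i = vvOf v i.val := by
  rw [phi_eq, Scol_gt_P H hi i.isLt]
  ring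

lemma phi_nonneg (H : Hyp m (vvOf v) (qqOf q)) (i : Fin m) : 0 ≤ phi v q (lamG v q) i := by
  rcases Nat.lt_trichotomy i.val (Pcol m (vvOf v) (qqOf q)) with h | h | h
  · rw [phi_lt_P v q H h]
  · rw [phi_eq]
    have hS := Scol_le H i.isLt
    have hq := H.hq i.val
    have hS' : (1 / qqOf q i.val) * Scol m (vvOf v) (qqOf q) i.val
        ≤ (1 / qqOf q i.val) * dem (vvOf v) (qqOf q) i.val := by
      apply mul_le_mul_of_nonneg_left hS
      positivity
    have hd : (1 / qqOf q i.val) * dem (vvOf v) (qqOf q) i.val = vvOf v i.val := by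
      unfold dem
      field_simp
    linarith
  · rw [phi_gt_P v q H h]
    exact H.hv0 i.val

end FinLevel

section Assembly

variable {m : ℕ} (v q : Fin m → ℝ)

lemma prop2 (H : Hyp m (vvOf v) (qqOf q)) (i j k l : Fin m) (h1 : i < j) (h2 : j < k)
    (h3 : k < l) : ¬(0 < lamG v q l i ∧ 0 < lamG v q k j) := by
  rintro ⟨ha, hb⟩
  have hil : i.val < l.val := by
    have : (i:ℕ) < j := h1
    have : (j:ℕ) < k := h2
    have : (k:ℕ) < l := h3
    omega
  have hjk : j.val < k.val := h2
  have ha' : 0 < lenk m (vvOf v) (qqOf q) l.val i.val := by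
    have : lamG v q l i = lenk m (vvOf v) (qqOf q) l.val i.val := by
      unfold lamG lamN
      rw [if_pos hil]
    linarith [this ▸ ha]
  have hb' : 0 < lenk m (vvOf v) (qqOf q) k.val j.val := by
    have : lamG v q k j = lenk m (vvOf v) (qqOf q) k.val j.val := by
      unfold lamG lamN
      rw [if_pos hjk]
    linarith [this ▸ hb]
  obtain ⟨_, hfi⟩ := len_pos_facts ha'
  obtain ⟨htj, _⟩ := len_pos_facts hb'
  have hij : i.val + 1 ≤ j.val := h1
  have hchain : fcol m (vvOf v) (qqOf q) i.val ≤ tcol m (vvOf v) (qqOf q) j.val := by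
    refine le_trans (fcol_le_tcol_succ _) ?_
    exact tcol_mono hij j.isLt
  have : (l.val:ℝ) < (k.val:ℝ) + 1 := by linarith
  have : l.val < k.val + 1 := by exact_mod_cast this
  have : (k:ℕ) < l := h3
  omega

lemma prop3 (H : Hyp m (vvOf v) (qqOf q)) (k i : Fin m)
    (hex : ∃ j : Fin m, j < i ∧ 0 < q j * phi v q (lamG v q) j) : lamG v q k i = 0 := by
  obtain ⟨j, hji, hpos⟩ := hex
  have hqj : 0 < q j := by
    have := qqOf_val q j
    rw [← this]
    exact H.hq j.val
  have hphij : 0 < phi v q (lamG v q) j := by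
    nlinarith
  have hjP : Pcol m (vvOf v) (qqOf q) ≤ j.val := by
    by_contra h
    push_neg at h
    rw [phi_lt_P v q H h] at hphij
    linarith
  have hiP : Pcol m (vvOf v) (qqOf q) < i.val := by
    have : (j:ℕ) < i := hji
    omega
  exact col_zero_full H hiP i.isLt k.val k.isLt

lemma xsG_alloc (H : Hyp m (vvOf v) (qqOf q)) : IsAlloc (xsG v q) := by
  constructor
  · intro a b hab
    have hmono : Monotone (xs m (vvOf v) (qqOf q)) :=
      monotone_nat_of_le_succ (xs_mono_succ H)
    exact hmono (by exact_mod_cast hab)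
  · intro i
    exact ⟨xs_nonneg H i.val, xs_le_one H i.val⟩

lemma swap_sum (f : Fin m → Fin m → ℝ) :
    ∑ i : Fin m, ∑ k ∈ Finset.Ici i, f i k = ∑ k : Fin m, ∑ i ∈ Finset.Iic k, f i k := by
  have h1 : ∀ i : Fin m, Finset.Ici i = Finset.univ.filter (fun k => i ≤ k) := by
    intro i; ext k; simp
  have h2 : ∀ k : Fin m, Finset.Iic k = Finset.univ.filter (fun i => i ≤ k) := by
    intro k; ext i; simp
  calc ∑ i : Fin m, ∑ k ∈ Finset.Ici i, f i k
      = ∑ i : Fin m, ∑ k : Fin m, if i ≤ k then f i k else 0 := by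
        refine Finset.sum_congr rfl ?_
        intro i _
        rw [h1 i, Finset.sum_filter]
    _ = ∑ k : Fin m, ∑ i : Fin m, if i ≤ k then f i k else 0 := Finset.sum_comm
    _ = ∑ k : Fin m, ∑ i ∈ Finset.Iic k, f i k := by
        refine Finset.sum_congr rfl ?_
        intro k _
        rw [h2 k, Finset.sum_filter]

lemma rearrange (hq : ∀ i : Fin m, q i ≠ 0) (lam' : Fin m → Fin m → ℝ)
    (hrow : ∀ k, ∑ j ∈ Finset.Iic k, lam' k j = 1) (x : Fin m → ℝ) :
    ∑ i, q i * phi v q lam' i * x i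
      = ∑ k, q k * ∑ i ∈ Finset.Iic k, lam' k i * (v k * x k - (v k - v i) * x i) := by
  have hL : ∀ i : Fin m, q i * phi v q lam' i * x i
      = q i * v i * x i - ∑ k ∈ Finset.Ici i, q k * (v k - v i) * lam' k i * x i := by
    intro i
    unfold phi
    set S := ∑ k ∈ Finset.Ici i, q k * (v k - v i) * lam' k i with hS
    have h2 : q i * (v i - 1 / q i * S) * x i = q i * v i * x i - S * x i := by
      have hqi := hq i
      field_simp
    rw [h2, hS, Finset.sum_mul]
  have hR : ∀ k : Fin m, q k * ∑ i ∈ Finset.Iic k, lam' k i * (v k * x k - (v k - v i) * x i)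
      = q k * v k * x k - ∑ i ∈ Finset.Iic k, q k * (v k - v i) * lam' k i * x i := by
    intro k
    have e1 : ∀ i ∈ Finset.Iic k, lam' k i * (v k * x k - (v k - v i) * x i)
        = lam' k i * (v k * x k) - lam' k i * ((v k - v i) * x i) := by
      intro i _; ring
    rw [Finset.sum_congr rfl e1, Finset.sum_sub_distrib, ← Finset.sum_mul, hrow, one_mul,
      mul_sub, Finset.mul_sum]
    congr 1
    · ring
    · refine Finset.sum_congr rfl ?_
      intro i _
      ring
  rw [Finset.sum_congr rfl (fun i _ => hL i), Finset.sum_congr rfl (fun k _ => hR k),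
    Finset.sum_sub_distrib, Finset.sum_sub_distrib]
  congr 1
  exact swap_sum (fun i k => q k * (v k - v i) * lam' k i * x i)

lemma alpha (H : Hyp m (vvOf v) (qqOf q)) (k i : Fin m) (hik : i ≤ k) :
    (v k - v i) * xsG v q i
      ≤ ∑ s ∈ Finset.Iic k, lamG v q k s * ((v k - v s) * xsG v q s) := by
  have hrow : ∑ s ∈ Finset.Iic k, lamG v q k s = 1 := (lamG_isMultiplier v q H).2.2 k
  have h1 : (v k - v i) * xsG v q i
      = ∑ s ∈ Finset.Iic k, lamG v q k s * ((v k - v i) * xsG v q i) := by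
    rw [← Finset.sum_mul, hrow, one_mul]
  rw [h1]
  refine Finset.sum_le_sum ?_
  intro s hs
  have hnn := lamN_nonneg H k.isLt s.val
  rcases eq_or_lt_of_le hnn with h0 | hpos
  · rw [show lamG v q k s = lamN m (vvOf v) (qqOf q) k.val s.val from rfl, ← h0]
    ring_nf
    exact le_refl _
  · refine mul_le_mul_of_nonneg_left ?_ (le_of_lt (by exact_mod_cast hpos))
    have hsk : s.val ≤ k.val := by exact_mod_cast Finset.mem_Iic.mp hs
    have hik' : i.val ≤ k.val := by exact_mod_cast hik
    have hp := pairwise_u H k.isLt hik' hsk hpos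
    rw [← vvOf_val v k, ← vvOf_val v i, ← vvOf_val v s]
    exact hp

end Assembly

end Greedy

/-- There exists an optimal multiplier simultaneously satisfying:
Property 1 (`φ(i,λ) ≥ 0` for all `i`),
Property 2 (no crossings), and
Property 3 (`λ k i = 0` whenever some `j < i` has `q j · φ(j,λ) > 0`). -/
theorem exists_optimal_multiplier_three_properties (m : ℕ) (hm : 1 ≤ m) (v q : Fin m → ℝ)
    (hv0 : ∀ i, 0 ≤ v i) (hvmono : ∀ i j : Fin m, i < j → v i < v j)
    (hq : ∀ i, 0 < q i) (hqsum : ∑ i, q i = 1) :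
    ∃ lam : Fin m → Fin m → ℝ, IsMultiplier lam ∧
      (∀ lam' : Fin m → Fin m → ℝ, IsMultiplier lam' → g v q lam ≤ g v q lam') ∧
      (∀ i, 0 ≤ phi v q lam i) ∧
      (∀ i j k l : Fin m, i < j → j < k → k < l → ¬(0 < lam l i ∧ 0 < lam k j)) ∧
      (∀ k i : Fin m, (∃ j : Fin m, j < i ∧ 0 < q j * phi v q lam j) → lam k i = 0) := by
  classical
  have H : Greedy.Hyp m (Greedy.vvOf v) (Greedy.qqOf q) := Greedy.HypOf v q hm hv0 hvmono hq
  have hqne : ∀ i : Fin m, q i ≠ 0 := fun i => (hq i).ne'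
  set Λ := Greedy.lamG v q with hΛ
  have hmul : IsMultiplier Λ := Greedy.lamG_isMultiplier v q H
  set X := Greedy.xsG v q with hX
  have hXalloc : IsAlloc X := Greedy.xsG_alloc v q H
  have hphiN : ∀ i, 0 ≤ phi v q Λ i := Greedy.phi_nonneg v q H
  refine ⟨Λ, hmul, ?_, hphiN,
    fun i j k l h1 h2 h3 => Greedy.prop2 v q H i j k l h1 h2 h3,
    fun k i hex => Greedy.prop3 v q H k i hex⟩
  intro lam' hlam'
  set C := ∑ i, q i * phi v q Λ i with hC
  -- the greedy multiplier evaluated at X gives C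
  have hCX : ∑ i, q i * phi v q Λ i * X i = C := by
    refine Finset.sum_congr rfl ?_
    intro i _
    rcases Nat.lt_or_ge i.val (Greedy.Pcol m (Greedy.vvOf v) (Greedy.qqOf q)) with h | h
    · rw [Greedy.phi_lt_P v q H h]; ring
    · have hX1 : X i = 1 := Greedy.xs_of_ge h
      rw [hX1]; ring
  have hC0 : 0 ≤ C := Finset.sum_nonneg fun i _ => mul_nonneg (hq i).le (hphiN i)
  -- `g` of the greedy multiplier is at most `C`
  have hgΛ : g v q Λ ≤ C := by
    refine Real.sSup_le ?_ hC0
    rintro s ⟨x, hx, rfl⟩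
    refine Finset.sum_le_sum ?_
    intro i _
    have h1 : q i * phi v q Λ i * x i ≤ q i * phi v q Λ i * 1 := by
      refine mul_le_mul_of_nonneg_left (hx.2 i).2 ?_
      exact mul_nonneg (hq i).le (hphiN i)
    simpa using h1
  -- for every multiplier, the value at `X` is at least `C`
  have hL' : C ≤ ∑ i, q i * phi v q lam' i * X i := by
    have hidΛ := Greedy.rearrange v q hqne Λ hmul.2.2 X
    have hid' := Greedy.rearrange v q hqne lam' hlam'.2.2 X
    rw [← hCX, hidΛ, hid']
    refine Finset.sum_le_sum ?_
    intro k _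
    refine mul_le_mul_of_nonneg_left ?_ (hq k).le
    set Mk := ∑ s ∈ Finset.Iic k, Λ k s * ((v k - v s) * X s) with hMk
    have hrowΛ := hmul.2.2 k
    have hrow' := hlam'.2.2 k
    have hΛval : ∑ i ∈ Finset.Iic k, Λ k i * (v k * X k - (v k - v i) * X i)
        = v k * X k - Mk := by
      have e1 : ∀ i ∈ Finset.Iic k, Λ k i * (v k * X k - (v k - v i) * X i)
          = Λ k i * (v k * X k) - Λ k i * ((v k - v i) * X i) := by
        intro i _; ring
      rw [Finset.sum_congr rfl e1, Finset.sum_sub_distrib, ← Finset.sum_mul, hrowΛ, one_mul]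
    rw [hΛval]
    have h2 : ∀ i ∈ Finset.Iic k, lam' k i * (v k * X k - Mk)
        ≤ lam' k i * (v k * X k - (v k - v i) * X i) := by
      intro i hi
      refine mul_le_mul_of_nonneg_left ?_ (hlam'.1 k i)
      have halpha := Greedy.alpha v q H k i (Finset.mem_Iic.mp hi)
      rw [← hMk] at halpha
      linarith
    have h3 : v k * X k - Mk = ∑ i ∈ Finset.Iic k, lam' k i * (v k * X k - Mk) := by
      rw [← Finset.sum_mul, hrow', one_mul]
    rw [h3]
    exact Finset.sum_le_sum h2
  -- conclude via sSup
  have hbdd : BddAbove {s : ℝ | ∃ x : Fin m → ℝ, IsAlloc x ∧ s = ∑ i, q i * phi v q lam' i * x i} := by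
    refine ⟨∑ i, |q i * phi v q lam' i|, ?_⟩
    rintro s ⟨x, hx, rfl⟩
    refine Finset.sum_le_sum ?_
    intro i _
    calc q i * phi v q lam' i * x i ≤ |q i * phi v q lam' i * x i| := le_abs_self _
      _ = |q i * phi v q lam' i| * |x i| := abs_mul _ _
      _ ≤ |q i * phi v q lam' i| * 1 := by
          refine mul_le_mul_of_nonneg_left ?_ (abs_nonneg _)
          rw [abs_le]
          exact ⟨by linarith [(hx.2 i).1], (hx.2 i).2⟩
      _ = |q i * phi v q lam' i| := mul_one _
  have hmem : (∑ i, q i * phi v q lam' i * X i)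
      ∈ {s : ℝ | ∃ x : Fin m → ℝ, IsAlloc x ∧ s = ∑ i, q i * phi v q lam' i * x i} :=
    ⟨X, hXalloc, rfl⟩
  exact le_trans hgΛ (le_trans hL' (le_csSup hbdd hmem))
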